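/- In the MergeSort recursion tree T_n with n ≥ 2 and depth h = ⌈log₂ n⌉: level h - 1 contains exactly 2^h - n leaves (labeled 1) and exactly n - 2^{h-1} internal nodes (labeled 2), and level h contains exactly 2n - 2^h nodes, all leaves labeled 1. -/

import Mathlib

inductive LTree where
  | leaf : ℕ → LTree
  | node : ℕ → LTree → LTree → LTree

def buildT (m : ℕ) : LTree :=
  if m ≤ 1 then .leaf m
  else .node m (buildT (m / 2)) (buildT ((m + 1) / 2))
decreasing_by all_goals omega

/-- The subtrees rooted at the nodes at distance `k` from the root. -/
def subtreesAt : LTree → ℕ → List LTree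
  | t, 0 => [t]
  | .leaf _, _ + 1 => []
  | .node _ l r, k + 1 => subtreesAt l k ++ subtreesAt r k

def isLeaf : LTree → Bool
  | .leaf _ => true
  | .node _ _ _ => false

def label : LTree → ℕ
  | .leaf m => m
  | .node m _ _ => m

lemma label_buildT (m : ℕ) : label (buildT m) = m := by
  rw [buildT]; split <;> rfl

lemma buildT_one : buildT 1 = .leaf 1 := by rw [buildT]; norm_num

lemma buildT_two : buildT 2 = .node 2 (.leaf 1) (.leaf 1) := by
  rw [buildT, if_neg (by omega)]
  norm_num [buildT_one]

lemma key (k : ℕ) : ∀ n, 2 ^ k ≤ n →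
    (subtreesAt (buildT n) k).length = 2 ^ k ∧
    ((subtreesAt (buildT n) k).map label).sum = n ∧
    ∀ t ∈ subtreesAt (buildT n) k,
      ∃ m, t = buildT m ∧ n < (m + 1) * 2 ^ k ∧ m * 2 ^ k < n + 2 ^ k := by
  induction k with
  | zero =>
    intro n _
    refine ⟨by simp [subtreesAt], by simp [subtreesAt, label_buildT], ?_⟩
    rintro t ht
    simp [subtreesAt] at ht
    exact ⟨n, ht, by omega, by omega⟩
  | succ k IH =>
    intro n hn
    have hp : (2:ℕ) ^ (k+1) = 2 * 2 ^ k := by ring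
    have hk : 0 < 2 ^ k := by positivity
    have hb : buildT n = .node n (buildT (n / 2)) (buildT ((n + 1) / 2)) := by
      rw [buildT, if_neg (by omega)]
    have hl := IH (n / 2) (by omega)
    have hr := IH ((n + 1) / 2) (by omega)
    rw [hb]
    simp only [subtreesAt, List.length_append, List.map_append, List.sum_append,
      List.mem_append]
    obtain ⟨hl1, hl2, hl3⟩ := hl
    obtain ⟨hr1, hr2, hr3⟩ := hr
    refine ⟨by omega, by omega, ?_⟩
    rintro t (ht | ht)
    · obtain ⟨m, rfl, h1, h2⟩ := hl3 t ht
      refine ⟨m, rfl, ?_, ?_⟩ <;>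
      · rw [hp, show (2 : ℕ) * 2 ^ k = 2 ^ k * 2 from by ring, ← mul_assoc]
        simp only [add_one_mul] at h1 ⊢
        generalize hE : (2:ℕ) ^ k = E at hk h1 h2 ⊢
        generalize hY : m * E = Y at h1 h2 ⊢
        omega
    · obtain ⟨m, rfl, h1, h2⟩ := hr3 t ht
      refine ⟨m, rfl, ?_, ?_⟩ <;>
      · rw [hp, show (2 : ℕ) * 2 ^ k = 2 ^ k * 2 from by ring, ← mul_assoc]
        simp only [add_one_mul] at h1 ⊢
        generalize hE : (2:ℕ) ^ k = E at hk h1 h2 ⊢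
        generalize hY : m * E = Y at h1 h2 ⊢
        omega

lemma subtreesAt_succ (t : LTree) : ∀ k,
    subtreesAt t (k + 1) = (subtreesAt t k).flatMap (fun s => subtreesAt s 1) := by
  induction t with
  | leaf m => rintro (_ | k) <;> simp [subtreesAt]
  | node m l r IHl IHr =>
    rintro (_ | k)
    · simp [subtreesAt]
    · simp [subtreesAt, IHl, IHr]

lemma counts (L : List LTree)
    (h : ∀ t ∈ L, t = buildT 1 ∨ t = buildT 2) :
    (L.map label).sum = (L.filter (fun t => isLeaf t)).length
        + 2 * (L.filter (fun t => ¬ isLeaf t)).length ∧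
    (L.filter (fun t => isLeaf t)).length
        + (L.filter (fun t => ¬ isLeaf t)).length = L.length ∧
    (∀ t ∈ L.filter (fun t => isLeaf t), label t = 1) ∧
    (∀ t ∈ L.filter (fun t => ¬ isLeaf t), label t = 2) ∧
    (L.flatMap (fun s => subtreesAt s 1)).length
        = 2 * (L.filter (fun t => ¬ isLeaf t)).length ∧
    (∀ t ∈ L.flatMap (fun s => subtreesAt s 1), isLeaf t = true ∧ label t = 1) := by
  induction L with
  | nil => simp
  | cons a L IH =>
    have ha := h a (by simp)
    obtain ⟨h1, h2, h3, h4, h5, h6⟩ := IH (fun t ht => h t (by simp [ht]))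
    rw [buildT_one] at ha
    rw [buildT_two] at ha
    rcases ha with rfl | rfl
    · refine ⟨?_, ?_, ?_, ?_, ?_, ?_⟩
      · simp only [List.map_cons, List.sum_cons, List.filter_cons, List.length_cons]
        simp [isLeaf, label] at h1 h2 h5 ⊢
        omega
      · simp only [List.filter_cons, List.length_cons]
        simp [isLeaf] at h1 h2 h5 ⊢
        omega
      · intro t ht
        simp only [List.filter_cons] at ht
        simp [isLeaf] at ht
        rcases ht with rfl | ht
        · rfl
        · exact h3 t (by simpa [isLeaf] using ht)
      · intro t ht
        simp only [List.filter_cons] at ht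
        simp [isLeaf] at ht
        exact h4 t (by simpa [isLeaf] using ht)
      · simp only [List.flatMap_cons, List.filter_cons, List.length_append]
        simp [isLeaf, subtreesAt] at h1 h2 h5 ⊢
        omega
      · intro t ht
        simp only [List.flatMap_cons, List.mem_append] at ht
        rcases ht with ht | ht
        · simp [subtreesAt] at ht
        · exact h6 t ht
    · refine ⟨?_, ?_, ?_, ?_, ?_, ?_⟩
      · simp only [List.map_cons, List.sum_cons, List.filter_cons, List.length_cons]
        simp [isLeaf, label] at h1 h2 h5 ⊢
        omega
      · simp only [List.filter_cons, List.length_cons]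
        simp [isLeaf] at h1 h2 h5 ⊢
        omega
      · intro t ht
        simp only [List.filter_cons] at ht
        simp [isLeaf] at ht
        exact h3 t (by simpa [isLeaf] using ht)
      · intro t ht
        simp only [List.filter_cons] at ht
        simp [isLeaf] at ht
        rcases ht with rfl | ht
        · rfl
        · exact h4 t (by simpa [isLeaf] using ht)
      · simp only [List.flatMap_cons, List.filter_cons, List.length_append]
        simp [isLeaf, subtreesAt] at h1 h2 h5 ⊢
        omega
      · intro t ht
        simp only [List.flatMap_cons, List.mem_append] at ht
        rcases ht with ht | ht
        · simp [subtreesAt] at ht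
          rcases ht with rfl | rfl <;> simp [isLeaf, label]
        · exact h6 t ht

theorem last_two_levels (n : ℕ) (hn : 2 ≤ n) :
    let h := Nat.clog 2 n
    (((subtreesAt (buildT n) (h - 1)).filter (fun t => isLeaf t)).length
        = 2 ^ h - n) ∧
    (∀ t ∈ (subtreesAt (buildT n) (h - 1)).filter (fun t => isLeaf t),
        label t = 1) ∧
    (((subtreesAt (buildT n) (h - 1)).filter (fun t => ¬ isLeaf t)).length
        = n - 2 ^ (h - 1)) ∧
    (∀ t ∈ (subtreesAt (buildT n) (h - 1)).filter (fun t => ¬ isLeaf t),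
        label t = 2) ∧
    ((subtreesAt (buildT n) h).length = 2 * n - 2 ^ h) ∧
    (∀ t ∈ subtreesAt (buildT n) h, isLeaf t = true ∧ label t = 1) := by
  intro h
  have hpos : 0 < h := Nat.clog_pos (by norm_num) hn
  have hub : n ≤ 2 ^ h := Nat.le_pow_clog (by norm_num) n
  have hlb : 2 ^ (h - 1) < n := Nat.pow_pred_clog_lt_self (by norm_num) hn
  have hpow : 2 ^ h = 2 * 2 ^ (h - 1) := by
    have := pow_succ 2 (h - 1)
    rw [Nat.sub_add_cancel hpos] at this
    omega
  obtain ⟨k1, k2, k3⟩ := key (h - 1) n (le_of_lt hlb)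
  set L := subtreesAt (buildT n) (h - 1) with hLdef
  have hmem : ∀ t ∈ L, t = buildT 1 ∨ t = buildT 2 := by
    intro t ht
    obtain ⟨m, rfl, h1, h2⟩ := k3 t ht
    rw [add_one_mul] at h1
    rcases m with _ | _ | _ | m
    · simp at h1; omega
    · left; rfl
    · right; rfl
    · exfalso
      have h3 : 3 * 2 ^ (h - 1) ≤ (m + 3) * 2 ^ (h - 1) :=
        Nat.mul_le_mul_right _ (by omega)
      generalize hE : (2:ℕ) ^ (h - 1) = E at *
      generalize hY : (m + 3) * E = Y at *
      omega
  obtain ⟨c1, c2, c3, c4, c5, c6⟩ := counts L hmem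
  have hlev : subtreesAt (buildT n) h = L.flatMap (fun s => subtreesAt s 1) := by
    conv_lhs => rw [show h = (h - 1) + 1 from by omega]
    rw [subtreesAt_succ, ← hLdef]
  refine ⟨by omega, c3, by omega, c4, ?_, ?_⟩
  · rw [hlev]; omega
  · rw [hlev]; exact c6
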